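/- Define jφ2 : ℝ⁴ → ℝ by jφ2(x,y,u,v) = (2+x²+y²−u²−v²)/2, and for t = (t_1,t_2,t_3,t_4) ∈ ℝ⁴ define hφ2_t : ℝ⁴ → ℝ by hφ2_t(x,y,u,v) = (1−2t_1)(u²+v²)/2 + (t_1/50)(u·x − v·y)·√(2−x²−y²+2u²+2v²)·√(8−x²−y²)·√(6−u²−v²)·√(6+x²+y²−2u²−2v²) + (t_2/50)(2−x²−y²+2u²+2v²)²·(4−x²−y²+u²+v²)² + (t_3/50)(2−x²−y²+2u²+2v²)²·(6−u²−v²)² + (t_4/100)(4−x²−y²+u²+v²)²·(6−u²−v²)². Then: (i) jφ2(0,0,0,0) = 1; (ii) the Fréchet derivative of jφ2 at a point p = (x,y,u,v) is the linear map (a,b,c,d) ↦ x·a + y·b − u·c − v·d, and it vanishes if and only if p = (0,0,0,0); (iii) for every t ∈ ℝ⁴, the Fréchet derivative of hφ2_t at (0,0,0,0) is zero. Hence the origin of the chart φ_2 is, for every t ∈ ℝ⁴, a singular point of rank zero of the system (J, H_t) with J-value 1. -/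

import Mathlib

open Real

/-- `J ∘ φ_2` in the chart `φ_2`: `jφ2(x,y,u,v) = (2+x²+y²−u²−v²)/2`. -/
noncomputable def jφ2 (p : Fin 4 → ℝ) : ℝ :=
  (2 + (p 0) ^ 2 + (p 1) ^ 2 - (p 2) ^ 2 - (p 3) ^ 2) / 2

/-- `H_t ∘ φ_2` in the chart `φ_2`. -/
noncomputable def hφ2 (t : Fin 4 → ℝ) (p : Fin 4 → ℝ) : ℝ :=
  (1 - 2 * t 0) * ((p 2) ^ 2 + (p 3) ^ 2) / 2 +
  (t 0 / 50) * (p 2 * p 0 - p 3 * p 1) *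
    Real.sqrt (2 - (p 0) ^ 2 - (p 1) ^ 2 + 2 * (p 2) ^ 2 + 2 * (p 3) ^ 2) *
    Real.sqrt (8 - (p 0) ^ 2 - (p 1) ^ 2) *
    Real.sqrt (6 - (p 2) ^ 2 - (p 3) ^ 2) *
    Real.sqrt (6 + (p 0) ^ 2 + (p 1) ^ 2 - 2 * (p 2) ^ 2 - 2 * (p 3) ^ 2) +
  (t 1 / 50) * (2 - (p 0) ^ 2 - (p 1) ^ 2 + 2 * (p 2) ^ 2 + 2 * (p 3) ^ 2) ^ 2 *
    (4 - (p 0) ^ 2 - (p 1) ^ 2 + (p 2) ^ 2 + (p 3) ^ 2) ^ 2 +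
  (t 2 / 50) * (2 - (p 0) ^ 2 - (p 1) ^ 2 + 2 * (p 2) ^ 2 + 2 * (p 3) ^ 2) ^ 2 *
    (6 - (p 2) ^ 2 - (p 3) ^ 2) ^ 2 +
  (t 3 / 100) * (4 - (p 0) ^ 2 - (p 1) ^ 2 + (p 2) ^ 2 + (p 3) ^ 2) ^ 2 *
    (6 - (p 2) ^ 2 - (p 3) ^ 2) ^ 2

noncomputable def pr (i : Fin 4) : (Fin 4 → ℝ) →L[ℝ] ℝ :=
  ContinuousLinearMap.proj i

lemma hasFDerivAt_coord (i : Fin 4) (x : Fin 4 → ℝ) :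
    HasFDerivAt (fun p : Fin 4 → ℝ => p i) (pr i) x :=
  (pr i).hasFDerivAt

lemma hasFDerivAt_sq (i : Fin 4) (x : Fin 4 → ℝ) :
    HasFDerivAt (fun p : Fin 4 → ℝ => (p i) ^ 2) ((2 * x i) • pr i) x := by
  have h := (hasFDerivAt_coord i x).mul (hasFDerivAt_coord i x)
  have e : (fun p : Fin 4 → ℝ => (p i) ^ 2) = fun p => p i * p i := by
    funext p; ring
  rw [e]
  refine h.congr_fderiv ?_
  ext v
  simp [pr]
  ring

lemma jφ2_hasFDerivAt (x : Fin 4 → ℝ) :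
    HasFDerivAt jφ2
      ((x 0) • pr 0 + (x 1) • pr 1 - (x 2) • pr 2 - (x 3) • pr 3) x := by
  have h := (((((hasFDerivAt_const (2:ℝ) x).add (hasFDerivAt_sq 0 x)).add
      (hasFDerivAt_sq 1 x)).sub (hasFDerivAt_sq 2 x)).sub
      (hasFDerivAt_sq 3 x)).mul_const (2⁻¹ : ℝ)
  have e : jφ2 = fun p : Fin 4 → ℝ =>
      (2 + (p 0) ^ 2 + (p 1) ^ 2 - (p 2) ^ 2 - (p 3) ^ 2) * 2⁻¹ := by
    funext p; simp [jφ2, div_eq_mul_inv]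
  rw [e]
  refine h.congr_fderiv ?_
  ext v
  simp [pr]
  ring

-- `Z f` helpers: zero derivative at the origin
def Z (f : (Fin 4 → ℝ) → ℝ) : Prop :=
  HasFDerivAt f (0 : (Fin 4 → ℝ) →L[ℝ] ℝ) 0

lemma Z.add {f g} (hf : Z f) (hg : Z g) : Z (fun p => f p + g p) := by
  have h := HasFDerivAt.add hf hg
  simp at h
  exact h

lemma Z.sub {f g} (hf : Z f) (hg : Z g) : Z (fun p => f p - g p) := by
  have h := HasFDerivAt.sub hf hg
  simp at h
  exact h

lemma Z.mul {f g} (hf : Z f) (hg : Z g) : Z (fun p => f p * g p) := by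
  have h := HasFDerivAt.mul hf hg
  simp at h
  exact h

lemma Z.const (c : ℝ) : Z (fun _ => c) := hasFDerivAt_const c 0

lemma Z.const_mul {f} (hf : Z f) (c : ℝ) : Z (fun p => c * f p) := by
  have h := HasFDerivAt.const_mul hf c
  simp at h
  exact h

lemma Z.mul_const {f} (hf : Z f) (c : ℝ) : Z (fun p => f p * c) := by
  have h := HasFDerivAt.mul_const hf c
  simp at h
  exact h

lemma Z.sq {f} (hf : Z f) : Z (fun p => f p ^ 2) := by
  have := hf.mul hf
  simpa [pow_two] using this

lemma Z.sq' (i : Fin 4) : Z (fun p => (p i) ^ 2) := by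
  have := hasFDerivAt_sq i 0
  simp at this
  exact this

lemma Z.coord_mul (i j : Fin 4) : Z (fun p => p i * p j) := by
  have := (hasFDerivAt_coord i 0).mul (hasFDerivAt_coord j 0)
  simp at this
  exact this

lemma Z.sqrt {f} (hf : Z f) (h0 : f 0 ≠ 0) : Z (fun p => Real.sqrt (f p)) := by
  have := (Real.hasDerivAt_sqrt h0).comp_hasFDerivAt 0 hf
  simp at this
  exact this

lemma hφ2_Z (t : Fin 4 → ℝ) : Z (hφ2 t) := by
  unfold hφ2 Z
  refine Z.add (Z.add (Z.add (Z.add ?_ ?_) ?_) ?_) ?_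
  · have h : Z (fun p : Fin 4 → ℝ =>
        ((1 - 2 * t 0) * ((p 2) ^ 2 + (p 3) ^ 2)) * 2⁻¹) :=
      (((Z.sq' 2).add (Z.sq' 3)).const_mul _).mul_const _
    simpa [div_eq_mul_inv, mul_assoc] using h
  · have zA : Z (fun p : Fin 4 → ℝ =>
        2 - (p 0) ^ 2 - (p 1) ^ 2 + 2 * (p 2) ^ 2 + 2 * (p 3) ^ 2) :=
      ((((Z.const 2).sub (Z.sq' 0)).sub (Z.sq' 1)).add
        ((Z.sq' 2).const_mul 2)).add ((Z.sq' 3).const_mul 2)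
    have zB : Z (fun p : Fin 4 → ℝ => 8 - (p 0) ^ 2 - (p 1) ^ 2) :=
      ((Z.const 8).sub (Z.sq' 0)).sub (Z.sq' 1)
    have zC : Z (fun p : Fin 4 → ℝ => 6 - (p 2) ^ 2 - (p 3) ^ 2) :=
      ((Z.const 6).sub (Z.sq' 2)).sub (Z.sq' 3)
    have zD : Z (fun p : Fin 4 → ℝ =>
        6 + (p 0) ^ 2 + (p 1) ^ 2 - 2 * (p 2) ^ 2 - 2 * (p 3) ^ 2) :=
      ((((Z.const 6).add (Z.sq' 0)).add (Z.sq' 1)).sub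
        ((Z.sq' 2).const_mul 2)).sub ((Z.sq' 3).const_mul 2)
    exact ((((((Z.coord_mul 2 0).sub (Z.coord_mul 3 1)).const_mul
      (t 0 / 50)).mul (zA.sqrt (by norm_num))).mul
      (zB.sqrt (by norm_num))).mul (zC.sqrt (by norm_num))).mul
      (zD.sqrt (by norm_num))
  · have zA : Z (fun p : Fin 4 → ℝ =>
        2 - (p 0) ^ 2 - (p 1) ^ 2 + 2 * (p 2) ^ 2 + 2 * (p 3) ^ 2) :=
      ((((Z.const 2).sub (Z.sq' 0)).sub (Z.sq' 1)).add
        ((Z.sq' 2).const_mul 2)).add ((Z.sq' 3).const_mul 2)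
    have zE : Z (fun p : Fin 4 → ℝ =>
        4 - (p 0) ^ 2 - (p 1) ^ 2 + (p 2) ^ 2 + (p 3) ^ 2) :=
      ((((Z.const 4).sub (Z.sq' 0)).sub (Z.sq' 1)).add (Z.sq' 2)).add (Z.sq' 3)
    exact ((zA.sq.const_mul (t 1 / 50)).mul zE.sq)
  · have zA : Z (fun p : Fin 4 → ℝ =>
        2 - (p 0) ^ 2 - (p 1) ^ 2 + 2 * (p 2) ^ 2 + 2 * (p 3) ^ 2) :=
      ((((Z.const 2).sub (Z.sq' 0)).sub (Z.sq' 1)).add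
        ((Z.sq' 2).const_mul 2)).add ((Z.sq' 3).const_mul 2)
    have zC : Z (fun p : Fin 4 → ℝ => 6 - (p 2) ^ 2 - (p 3) ^ 2) :=
      ((Z.const 6).sub (Z.sq' 2)).sub (Z.sq' 3)
    exact ((zA.sq.const_mul (t 2 / 50)).mul zC.sq)
  · have zE : Z (fun p : Fin 4 → ℝ =>
        4 - (p 0) ^ 2 - (p 1) ^ 2 + (p 2) ^ 2 + (p 3) ^ 2) :=
      ((((Z.const 4).sub (Z.sq' 0)).sub (Z.sq' 1)).add (Z.sq' 2)).add (Z.sq' 3)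
    have zC : Z (fun p : Fin 4 → ℝ => 6 - (p 2) ^ 2 - (p 3) ^ 2) :=
      ((Z.const 6).sub (Z.sq' 2)).sub (Z.sq' 3)
    exact ((zE.sq.const_mul (t 3 / 100)).mul zC.sq)

/-- (i) `jφ2(0) = 1`; (ii) the Fréchet derivative of `jφ2` at `p = (x,y,u,v)` is the
linear map `(a,b,c,d) ↦ xa + yb − uc − vd`, and it vanishes iff `p = 0`;
(iii) for every `t`, the Fréchet derivative of `hφ2 t` at the origin is zero.
Hence the origin of the chart `φ_2` is, for every `t`, a rank-zero singular point of
`(J, H_t)` with `J`-value `1`. -/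
theorem origin_of_chart_two_is_rank_zero :
    jφ2 0 = 1 ∧
    (∀ p v : Fin 4 → ℝ,
      fderiv ℝ jφ2 p v = p 0 * v 0 + p 1 * v 1 - p 2 * v 2 - p 3 * v 3) ∧
    (∀ p : Fin 4 → ℝ, fderiv ℝ jφ2 p = 0 ↔ p = 0) ∧
    (∀ t : Fin 4 → ℝ, fderiv ℝ (hφ2 t) 0 = 0) := by
  have hval : jφ2 0 = 1 := by simp [jφ2]
  have hder : ∀ p v : Fin 4 → ℝ,
      fderiv ℝ jφ2 p v = p 0 * v 0 + p 1 * v 1 - p 2 * v 2 - p 3 * v 3 := by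
    intro p v
    rw [(jφ2_hasFDerivAt p).fderiv]
    simp [pr]
  refine ⟨hval, hder, ?_, ?_⟩
  · intro p
    constructor
    · intro h
      funext i
      fin_cases i
      · have := hder p (Pi.single 0 1)
        rw [h] at this
        simpa [Pi.single_apply] using this.symm
      · have := hder p (Pi.single 1 1)
        rw [h] at this
        simpa [Pi.single_apply] using this.symm
      · have := hder p (Pi.single 2 1)
        rw [h] at this
        simpa [Pi.single_apply] using this.symm
      · have := hder p (Pi.single 3 1)
        rw [h] at this
        simpa [Pi.single_apply] using this.symm
    · intro h
      subst h
      ext v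
      simpa using hder 0 v
  · intro t
    exact (hφ2_Z t).fderiv
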